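/- If P_0 < 4π|n| for a nonzero integer n, then there exist positive constants C_1, C_2 (depending only on n, P_0) such that for all admissible u with beam power P(u) = P_0, the functional I(u) = (1/2)∫_0^R { r u_r^2 + (n^2/r) u^2 − r V u^2 − (r/2) u^4 } dr satisfies I(u) ≥ C_1 ∫_0^R r u_r^2 dr + C_2 ∫_0^R u^2/r dr − P_0 V_0/(4π), where V_0 = max_{[0,R]} |V|. In particular I is bounded below and coercive on the constraint set. -/

import Mathlib

open MeasureTheory Set

/-- Admissibility: absolutely continuous with derivative `u'`, zero boundary values,
finite energy. -/
def Admissible (R : ℝ) (u u' : ℝ → ℝ) : Prop :=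
  (∀ x ∈ Icc (0:ℝ) R, HasDerivAt u (u' x) x) ∧ u 0 = 0 ∧ u R = 0 ∧
    IntegrableOn (fun r => r * u' r ^ 2) (Ioo 0 R) ∧
    IntegrableOn (fun r => u r ^ 2 / r) (Ioo 0 R) ∧
    IntegrableOn (fun r => r * u r ^ 4) (Ioo 0 R)

/-- The action functional `I`. -/
noncomputable def actionI (R : ℝ) (n : ℤ) (V : ℝ → ℝ) (u u' : ℝ → ℝ) : ℝ :=
  (1/2) * ∫ r in Ioo (0:ℝ) R,
    (r * u' r ^ 2 + ((n:ℝ)^2 / r) * u r ^ 2 - r * V r * u r ^ 2 - r / 2 * u r ^ 4)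

/-- The beam power `P`. -/
noncomputable def power (R : ℝ) (u : ℝ → ℝ) : ℝ :=
  2 * Real.pi * ∫ r in Ioo (0:ℝ) R, r * u r ^ 2

/-- Pointwise AM–GM inequality used to bound `2|p q|`. -/
lemma amgm_aux (a x p q : ℝ) (ha : 0 < a) (hx : 0 < x) :
    |2 * p * q| ≤ a * (x * q ^ 2) + (1 / a) * (p ^ 2 / x) := by
  have hax : 0 < a * x := mul_pos ha hx
  have h1 : |2 * p * q| * (a * x) ≤ (a * x) ^ 2 * q ^ 2 + p ^ 2 := by
    have habs : |2 * p * q| = 2 * |p| * |q| := by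
      rw [abs_mul, abs_mul]; simp [abs_of_nonneg, mul_assoc]
    rw [habs]
    nlinarith [sq_nonneg (a * x * |q| - |p|), sq_abs p, sq_abs q,
      abs_nonneg p, abs_nonneg q]
  have h2 : |2 * p * q| ≤ ((a * x) ^ 2 * q ^ 2 + p ^ 2) / (a * x) :=
    (le_div_iff₀ hax).mpr h1
  calc |2 * p * q| ≤ ((a * x) ^ 2 * q ^ 2 + p ^ 2) / (a * x) := h2
    _ = a * (x * q ^ 2) + (1 / a) * (p ^ 2 / x) := by
        field_simp

/-- coercive lower bound for `I` under the constraint `P(u) = P₀ < 4π|n|`. -/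
theorem stmt2 (R : ℝ) (hR : 0 < R) (n : ℤ) (hn : n ≠ 0)
    (V : ℝ → ℝ) (hV : ContinuousOn V (Icc 0 R)) (V0 : ℝ)
    (hV0 : IsGreatest ((fun r => |V r|) '' Icc (0:ℝ) R) V0)
    (P0 : ℝ) (hP0 : 0 < P0) (hP0n : P0 < 4 * Real.pi * |(n:ℝ)|) :
    ∃ C1 > (0:ℝ), ∃ C2 > (0:ℝ), ∀ u u' : ℝ → ℝ, Admissible R u u' →
      power R u = P0 →
      actionI R n V u u' ≥
        C1 * (∫ r in Ioo (0:ℝ) R, r * u' r ^ 2) +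
        C2 * (∫ r in Ioo (0:ℝ) R, u r ^ 2 / r) - P0 * V0 / (4 * Real.pi) := by
  have hπ : (0:ℝ) < Real.pi := Real.pi_pos
  have hnabs : (0:ℝ) < |(n:ℝ)| := by
    rw [abs_pos]; exact_mod_cast hn
  set a : ℝ := 1 / |(n:ℝ)| with ha_def
  have ha : 0 < a := by positivity
  have han : a * |(n:ℝ)| = 1 := by
    rw [ha_def]; field_simp
  have hV0nn : 0 ≤ V0 := by
    obtain ⟨x, hx, hVx⟩ := hV0.1
    exact hVx ▸ abs_nonneg _
  have hVbound : ∀ x ∈ Icc (0:ℝ) R, V x ≤ V0 := fun x hx =>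
    le_trans (le_abs_self _) (hV0.2 (mem_image_of_mem _ hx))
  refine ⟨1/2 - a * P0 / (8 * Real.pi), ?_, (n:ℝ)^2/2 - P0 / (8 * Real.pi * a), ?_, ?_⟩
  · have h1 : a * P0 < a * (4 * Real.pi * |(n:ℝ)|) :=
      mul_lt_mul_of_pos_left hP0n ha
    have h2 : a * (4 * Real.pi * |(n:ℝ)|) = 4 * Real.pi := by
      rw [ha_def]; field_simp
    have h3 : a * P0 / (8 * Real.pi) < 1/2 := by
      rw [div_lt_iff₀ (by positivity)]
      nlinarith
    linarith
  · have key : (n:ℝ)^2 * a = |(n:ℝ)| := by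
      rw [← sq_abs]; linear_combination |(n:ℝ)| * han
    have key2 : (n:ℝ)^2/2 * (8 * Real.pi * a) = 4 * Real.pi * |(n:ℝ)| := by
      linear_combination 4 * Real.pi * key
    have h3 : P0 / (8 * Real.pi * a) < (n:ℝ)^2/2 := by
      rw [div_lt_iff₀ (by positivity)]
      linarith [key2, hP0n]
    linarith
  · intro u u' hadm hpow
    obtain ⟨hderiv, hu0, huR, hIA, hIB, hIQ⟩ := hadm
    set A := ∫ r in Ioo (0:ℝ) R, r * u' r ^ 2 with hA_def
    set B := ∫ r in Ioo (0:ℝ) R, u r ^ 2 / r with hB_def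
    -- basic regularity
    have hu_cont : ContinuousOn u (Icc 0 R) := fun x hx =>
      ((hderiv x hx).continuousAt).continuousWithinAt
    have hu'_meas : ∀ s : Set ℝ, MeasurableSet s → s ⊆ Icc 0 R →
        AEStronglyMeasurable u' (volume.restrict s) := fun s hs hsub =>
      (measurable_deriv u).aestronglyMeasurable.congr
        (((ae_restrict_mem hs).mono fun x hx => (hderiv x (hsub hx)).deriv))
    have hA0 : 0 ≤ A := setIntegral_nonneg measurableSet_Ioo
      (fun x hx => mul_nonneg hx.1.le (sq_nonneg _))
    have hB0 : 0 ≤ B := setIntegral_nonneg measurableSet_Ioo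
      (fun x hx => div_nonneg (sq_nonneg _) hx.1.le)
    -- the dominating function for 2 u u'
    set g : ℝ → ℝ := fun x => a * (x * u' x ^ 2) + (1 / a) * (u x ^ 2 / x) with hg_def
    have hg_int : IntegrableOn g (Ioo 0 R) := (hIA.const_mul a).add (hIB.const_mul (1/a))
    have hg_nonneg : ∀ x ∈ Ioo (0:ℝ) R, 0 ≤ g x := fun x hx => by
      have : (0:ℝ) < x := hx.1
      positivity
    have hg_val : ∫ x in Ioo (0:ℝ) R, g x = a * A + B / a := by
      rw [hg_def, integral_add (hIA.const_mul a) (hIB.const_mul (1/a)),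
        integral_const_mul, integral_const_mul]
      ring
    -- pointwise sup bound
    have hsup : ∀ r ∈ Ioo (0:ℝ) R, u r ^ 2 ≤ a * A + B / a := by
      intro r hr
      have hrR : r ≤ R := hr.2.le
      have hsub1 : Ioo r R ⊆ Ioo 0 R := Ioo_subset_Ioo hr.1.le le_rfl
      have hsubIcc : Ioo r R ⊆ Icc 0 R := fun x hx =>
        ⟨(hr.1.trans hx.1).le, hx.2.le⟩
      -- integrability of 2 u u' on Ioo r R
      have hmeas : AEStronglyMeasurable (fun x => 2 * u x * u' x)
          (volume.restrict (Ioo r R)) := by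
        have m1 : AEStronglyMeasurable u (volume.restrict (Ioo r R)) :=
          (hu_cont.mono hsubIcc).aestronglyMeasurable measurableSet_Ioo
        have m2 := hu'_meas (Ioo r R) measurableSet_Ioo hsubIcc
        exact (m1.const_mul 2).mul m2
      have hbound : ∀ x ∈ Ioo r R, |2 * u x * u' x| ≤ g x := fun x hx =>
        amgm_aux a x (u x) (u' x) ha (hr.1.trans hx.1)
      have hint : IntegrableOn (fun x => 2 * u x * u' x) (Ioo r R) := by
        apply Integrable.mono' (hg_int.mono_set hsub1) hmeas
        exact (ae_restrict_mem measurableSet_Ioo).mono fun x hx => by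
          rw [Real.norm_eq_abs]; exact hbound x hx
      have hintI : IntervalIntegrable (fun x => 2 * u x * u' x) volume r R := by
        rw [intervalIntegrable_iff_integrableOn_Ioc_of_le hrR,
          integrableOn_Ioc_iff_integrableOn_Ioo]
        exact hint
      -- FTC
      have hderiv2 : ∀ x ∈ uIcc r R, HasDerivAt (fun y => u y ^ 2) (2 * u x * u' x) x := by
        intro x hx
        rw [uIcc_of_le hrR] at hx
        have hx' : x ∈ Icc 0 R := ⟨hr.1.le.trans hx.1, hx.2⟩
        have h := (hderiv x hx').fun_pow 2
        refine h.congr_deriv ?_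
        push_cast
        ring
      have hftc := intervalIntegral.integral_eq_sub_of_hasDerivAt hderiv2 hintI
      simp only [huR] at hftc
      have hval : u r ^ 2 = -(∫ x in r..R, 2 * u x * u' x) := by
        rw [hftc]; ring
      have habs : u r ^ 2 ≤ ∫ x in Ioo r R, |2 * u x * u' x| := by
        rw [hval, ← intervalIntegral.integral_neg]
        rw [intervalIntegral.integral_of_le hrR, integral_Ioc_eq_integral_Ioo]
        apply setIntegral_mono_on hint.neg hint.abs measurableSet_Ioo
        intro x _
        exact neg_le_abs _
      calc u r ^ 2 ≤ ∫ x in Ioo r R, |2 * u x * u' x| := habs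
        _ ≤ ∫ x in Ioo r R, g x := by
            apply setIntegral_mono_on hint.abs (hg_int.mono_set hsub1) measurableSet_Ioo
            exact hbound
        _ ≤ ∫ x in Ioo 0 R, g x := by
            apply setIntegral_mono_set hg_int
            · exact (ae_restrict_mem measurableSet_Ioo).mono fun x hx => hg_nonneg x hx
            · exact hsub1.eventuallyLE
        _ = a * A + B / a := hg_val
    set M : ℝ := a * A + B / a with hM_def
    have hM0 : 0 ≤ M := by positivity
    clear_value M A B
    -- integrability of auxiliary integrands
    have h_ru2 : IntegrableOn (fun x => x * u x ^ 2) (Ioo 0 R) := by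
      apply Integrable.mono' (hIB.const_mul (R^2))
      · exact ((continuousOn_id.mul (hu_cont.pow 2)).mono Ioo_subset_Icc_self
          |>.aestronglyMeasurable measurableSet_Ioo)
      · refine (ae_restrict_mem measurableSet_Ioo).mono fun x hx => ?_
        have hx0 : (0:ℝ) < x := hx.1
        rw [Real.norm_eq_abs, abs_of_nonneg (by positivity)]
        have h1 : x * u x ^ 2 = x ^ 2 * (u x ^ 2 / x) := by
          field_simp
        rw [h1]
        apply mul_le_mul_of_nonneg_right _ (by positivity)
        nlinarith [hx.2, hx0]
    have hPr : ∫ x in Ioo (0:ℝ) R, x * u x ^ 2 = P0 / (2 * Real.pi) := by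
      rw [power] at hpow
      field_simp
      linarith [hpow]
    have h_f3 : IntegrableOn (fun x => x * V x * u x ^ 2) (Ioo 0 R) := by
      apply Integrable.mono' (h_ru2.const_mul V0)
      · exact (((continuousOn_id.mul hV).mul (hu_cont.pow 2)).mono Ioo_subset_Icc_self
          |>.aestronglyMeasurable measurableSet_Ioo)
      · refine (ae_restrict_mem measurableSet_Ioo).mono fun x hx => ?_
        have hx0 : (0:ℝ) < x := hx.1
        have hVx : |V x| ≤ V0 := hV0.2 (mem_image_of_mem _ ⟨hx.1.le, hx.2.le⟩)
        rw [Real.norm_eq_abs, abs_mul, abs_mul, abs_of_nonneg hx0.le,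
          abs_of_nonneg (sq_nonneg (u x))]
        calc x * |V x| * u x ^ 2 ≤ x * V0 * u x ^ 2 := by
              apply mul_le_mul_of_nonneg_right _ (sq_nonneg _)
              exact mul_le_mul_of_nonneg_left hVx hx0.le
          _ = V0 * (x * u x ^ 2) := by ring
    have hfeq2 : (fun x => ((n:ℝ)^2 / x) * u x ^ 2) = fun x => (n:ℝ)^2 * (u x ^ 2 / x) := by
      funext x; ring
    have h_f2 : IntegrableOn (fun x => ((n:ℝ)^2 / x) * u x ^ 2) (Ioo 0 R) := by
      rw [hfeq2]; exact hIB.const_mul _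
    have hfeq4 : (fun x => x / 2 * u x ^ 4) = fun x => (1/2 : ℝ) * (x * u x ^ 4) := by
      funext x; ring
    have h_f4 : IntegrableOn (fun x => x / 2 * u x ^ 4) (Ioo 0 R) := by
      rw [hfeq4]; exact hIQ.const_mul _
    -- split the action integral
    have i12 : IntegrableOn (fun x => x * u' x ^ 2 + ((n:ℝ)^2 / x) * u x ^ 2) (Ioo 0 R) :=
      hIA.add h_f2
    have i123 : IntegrableOn
        (fun x => x * u' x ^ 2 + ((n:ℝ)^2 / x) * u x ^ 2 - x * V x * u x ^ 2) (Ioo 0 R) :=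
      i12.sub h_f3
    have hsplit : actionI R n V u u' = (1/2) * (A + (n:ℝ)^2 * B
        - (∫ x in Ioo (0:ℝ) R, x * V x * u x ^ 2)
        - (∫ x in Ioo (0:ℝ) R, x / 2 * u x ^ 4)) := by
      rw [actionI, integral_sub i123 h_f4, integral_sub i12 h_f3, integral_add hIA h_f2,
        hfeq2, integral_const_mul, hA_def, hB_def]
    -- bound the potential term
    have hI3 : (∫ x in Ioo (0:ℝ) R, x * V x * u x ^ 2) ≤ V0 * (P0 / (2 * Real.pi)) := by
      calc (∫ x in Ioo (0:ℝ) R, x * V x * u x ^ 2)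
          ≤ ∫ x in Ioo (0:ℝ) R, V0 * (x * u x ^ 2) := by
            apply setIntegral_mono_on h_f3 (h_ru2.const_mul V0) measurableSet_Ioo
            intro x hx
            have hVx : V x ≤ V0 := hVbound x ⟨hx.1.le, hx.2.le⟩
            nlinarith [mul_nonneg hx.1.le (sq_nonneg (u x))]
        _ = V0 * (P0 / (2 * Real.pi)) := by rw [integral_const_mul, hPr]
    -- bound the quartic term
    have hI4 : (∫ x in Ioo (0:ℝ) R, x / 2 * u x ^ 4) ≤ M / 2 * (P0 / (2 * Real.pi)) := by
      calc (∫ x in Ioo (0:ℝ) R, x / 2 * u x ^ 4)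
          ≤ ∫ x in Ioo (0:ℝ) R, M / 2 * (x * u x ^ 2) := by
            apply setIntegral_mono_on h_f4 (h_ru2.const_mul (M/2)) measurableSet_Ioo
            intro x hx
            have h1 : u x ^ 2 ≤ M := hsup x hx
            have h2 : u x ^ 2 * (x * u x ^ 2) ≤ M * (x * u x ^ 2) :=
              mul_le_mul_of_nonneg_right h1 (mul_nonneg hx.1.le (sq_nonneg (u x)))
            nlinarith [h2]
        _ = M / 2 * (P0 / (2 * Real.pi)) := by rw [integral_const_mul, hPr]
    -- final arithmetic
    rw [hsplit, ge_iff_le]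
    have hMexp : M = a * A + B / a := hM_def
    have harith : (1/2 - a * P0 / (8 * Real.pi)) * A + ((n:ℝ)^2/2 - P0 / (8 * Real.pi * a)) * B
        - P0 * V0 / (4 * Real.pi)
        = (1/2) * (A + (n:ℝ)^2 * B - V0 * (P0 / (2 * Real.pi))
            - (a * A + B / a) / 2 * (P0 / (2 * Real.pi))) := by
      ring
    rw [harith]
    have := hMexp ▸ hI4
    linarith [hI3, this]
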